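/- If f is twice continuously differentiable on (0,1) and (1-x)²·f''(x) → C⁻ > 0 as x → 1⁻, then f(x)/|log(1-x)| → C⁻ as x → 1⁻. -/

import Mathlib

open Set Filter Topology intervalIntegral

set_option maxHeartbeats 1000000 in
lemma lhopital_aux (g g' w w' : ℝ → ℝ) (C : ℝ)
    (hg : ∀ x ∈ Ioo (0:ℝ) 1, HasDerivAt g (g' x) x)
    (hw : ∀ x ∈ Ioo (0:ℝ) 1, HasDerivAt w (w' x) x)
    (hg'c : ContinuousOn g' (Ioo (0:ℝ) 1))
    (hw'c : ContinuousOn w' (Ioo (0:ℝ) 1))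
    (hwtop : Tendsto w (𝓝[Ioo (0:ℝ) 1] 1) atTop)
    (hratio : ∀ ε > 0, ∀ᶠ x in 𝓝[Ioo (0:ℝ) 1] 1, |g' x - C * w' x| ≤ ε * w' x) :
    Tendsto (fun x => g x / w x) (𝓝[Ioo (0:ℝ) 1] 1) (𝓝 C) := by
  rw [nhdsWithin_Ioo_eq_nhdsLT zero_lt_one] at hwtop ⊢
  have hratio' : ∀ ε > 0, ∀ᶠ x in 𝓝[<] (1:ℝ), |g' x - C * w' x| ≤ ε * w' x := by
    intro ε hε
    have := hratio ε hε
    rwa [nhdsWithin_Ioo_eq_nhdsLT zero_lt_one] at this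
  rw [Metric.tendsto_nhds]
  intro ε hε
  have hε3 : (0:ℝ) < ε/3 := by linarith
  obtain ⟨a, ha1, hsub⟩ := mem_nhdsLT_iff_exists_Ioo_subset.mp (hratio' (ε/3) hε3)
  -- b : left endpoint with b ∈ (0,1), bound holds on Ioo b 1
  set b : ℝ := max a (1/2) with hb
  have hb1 : b < 1 := max_lt ha1 (by norm_num)
  have hb0 : 0 < b := lt_of_lt_of_le (by norm_num) (le_max_right _ _)
  have hbound : ∀ t ∈ Ioo b 1, |g' t - C * w' t| ≤ ε/3 * w' t := by
    intro t ht
    exact hsub ⟨lt_of_le_of_lt (le_max_left a (1/2)) ht.1, ht.2⟩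
  -- base point c
  set c : ℝ := (b+1)/2 with hc
  have hcb : b < c := by simp only [hc]; linarith
  have hc1 : c < 1 := by simp only [hc]; linarith
  have hc0 : 0 < c := lt_trans hb0 hcb
  have hmemc : c ∈ Ioo (0:ℝ) 1 := ⟨hc0, hc1⟩
  obtain ⟨K, hK0, hKeq⟩ : ∃ K : ℝ, 0 ≤ K ∧ K = ε/3 * |w c| + |g c - C * w c| :=
    ⟨_, by positivity, rfl⟩
  have E2 : ∀ᶠ x in 𝓝[<] (1:ℝ), K * 3 / ε + 1 ≤ w x := hwtop.eventually_ge_atTop _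
  have E1 : Ioo c 1 ∈ 𝓝[<] (1:ℝ) := Ioo_mem_nhdsLT_of_mem ⟨hc1, le_refl 1⟩
  filter_upwards [E1, E2] with x hx hwx
  have hx01 : x ∈ Ioo (0:ℝ) 1 := ⟨lt_trans hc0 hx.1, hx.2⟩
  have hcx : c ≤ x := le_of_lt hx.1
  have hIcc : Icc c x ⊆ Ioo (0:ℝ) 1 := fun t ht => ⟨lt_of_lt_of_le hc0 ht.1, lt_of_le_of_lt ht.2 hx.2⟩
  have huIcc : uIcc c x ⊆ Ioo (0:ℝ) 1 := by rw [uIcc_of_le hcx]; exact hIcc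
  have hIccb : Icc c x ⊆ Ioo b 1 := fun t ht => ⟨lt_of_lt_of_le hcb ht.1, lt_of_le_of_lt ht.2 hx.2⟩
  -- integrability
  have hig : IntervalIntegrable g' MeasureTheory.volume c x :=
    (hg'c.mono huIcc).intervalIntegrable
  have hiw : IntervalIntegrable w' MeasureTheory.volume c x :=
    (hw'c.mono huIcc).intervalIntegrable
  have hih : IntervalIntegrable (fun t => g' t - C * w' t) MeasureTheory.volume c x :=
    hig.sub (hiw.const_mul C)
  -- FTC
  have ftcg : ∫ t in c..x, g' t = g x - g c :=
    integral_eq_sub_of_hasDerivAt (fun t ht => hg t (huIcc ht)) hig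
  have ftcw : ∫ t in c..x, w' t = w x - w c :=
    integral_eq_sub_of_hasDerivAt (fun t ht => hw t (huIcc ht)) hiw
  have hsplit : ∫ t in c..x, (g' t - C * w' t) = (g x - g c) - C * (w x - w c) := by
    rw [integral_sub hig (hiw.const_mul C), integral_const_mul, ftcg, ftcw]
  -- bound on the integral
  have hboundInt : |(g x - g c) - C * (w x - w c)| ≤ ε/3 * (w x - w c) := by
    rw [← hsplit]
    have h1 : |∫ t in c..x, (g' t - C * w' t)| ≤ ∫ t in c..x, |g' t - C * w' t| := by
      simpa [Real.norm_eq_abs] using norm_integral_le_integral_norm (f := fun t => g' t - C * w' t) (μ := MeasureTheory.volume) hcx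
    have h2 : (∫ t in c..x, |g' t - C * w' t|) ≤ ∫ t in c..x, ε/3 * w' t :=
      integral_mono_on hcx hih.abs ((hiw.const_mul _)) (fun t ht => hbound t (hIccb ht))
    calc |∫ t in c..x, (g' t - C * w' t)| ≤ ∫ t in c..x, |g' t - C * w' t| := h1
      _ ≤ ∫ t in c..x, ε/3 * w' t := h2
      _ = ε/3 * (w x - w c) := by rw [integral_const_mul, ftcw]
  -- w x is large and positive
  have hwxK : K * 3 / ε + 1 ≤ w x := hwx
  have hwx0 : 0 < w x := lt_of_lt_of_le (by positivity) hwxK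
  -- main estimate
  have hnum : |g x - C * w x| ≤ ε/3 * w x + K := by
    have h3 : |g x - C * w x| ≤ |(g x - g c) - C * (w x - w c)| + |g c - C * w c| := by
      have : g x - C * w x = ((g x - g c) - C * (w x - w c)) + (g c - C * w c) := by ring
      rw [this]; exact abs_add_le _ _
    have h4 : ε/3 * (w x - w c) ≤ ε/3 * w x + ε/3 * |w c| := by
      have : w x - w c ≤ w x + |w c| := by
        have := neg_abs_le (w c); linarith
      nlinarith
    calc |g x - C * w x| ≤ ε/3 * (w x - w c) + |g c - C * w c| := by linarith [hboundInt]
      _ ≤ ε/3 * w x + K := by rw [hKeq]; linarith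
  rw [Real.dist_eq]
  have : g x / w x - C = (g x - C * w x) / w x := by field_simp
  rw [this, abs_div, abs_of_pos hwx0]
  rw [div_lt_iff₀ hwx0]
  have hKlt : K < ε/3 * w x + ε/3 := by
    have : K * 3 / ε ≤ w x - 1 := by linarith
    rw [div_le_iff₀ hε] at this
    have hεw : (w x - 1) * ε = ε * w x - ε := by ring
    have hεw2 : ε/3 * w x = (ε * w x)/3 := by ring
    linarith
  calc |g x - C * w x| ≤ ε/3 * w x + K := hnum
    _ < ε/3 * w x + ε/3 * w x + ε/3 := by linarith
    _ ≤ ε * w x := by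
      have h6 : (0:ℝ) ≤ K * 3 / ε := by positivity
      have h7 : (1:ℝ) ≤ w x := by linarith
      nlinarith

theorem log_singularity_at_one (f f' f'' : ℝ → ℝ) (C : ℝ) (hC : 0 < C)
    (hderiv1 : ∀ x ∈ Ioo (0:ℝ) 1, HasDerivAt f (f' x) x)
    (hderiv2 : ∀ x ∈ Ioo (0:ℝ) 1, HasDerivAt f' (f'' x) x)
    (hcont : ContinuousOn f'' (Ioo (0:ℝ) 1))
    (hlim : Tendsto (fun x => f'' x * (1 - x) ^ 2) (nhdsWithin 1 (Ioo (0:ℝ) 1)) (nhds C)) :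
    Tendsto (fun x => f x / |Real.log (1 - x)|) (nhdsWithin 1 (Ioo (0:ℝ) 1)) (nhds C) := by
  have hne : ∀ x ∈ Ioo (0:ℝ) 1, (1 - x) ≠ 0 := fun x hx => by
    have := hx.2; intro h; linarith [hx.2, sub_eq_zero.mp h]
  have hpos : ∀ x ∈ Ioo (0:ℝ) 1, (0:ℝ) < 1 - x := fun x hx => by linarith [hx.2]
  -- tendsto (1 - x) → 0⁺
  have hsub : Tendsto (fun x : ℝ => 1 - x) (𝓝[Ioo (0:ℝ) 1] 1) (𝓝[>] 0) := by
    apply tendsto_nhdsWithin_of_tendsto_nhds_of_eventually_within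
    · have : Tendsto (fun x : ℝ => 1 - x) (𝓝 1) (𝓝 (1 - 1)) :=
        (continuous_const.sub continuous_id).tendsto 1
      simpa using this.mono_left nhdsWithin_le_nhds
    · exact eventually_nhdsWithin_of_forall (fun x hx => hpos x hx)
  -- Step 1: f' x * (1 - x) → C
  have step1 : Tendsto (fun x => f' x * (1 - x)) (𝓝[Ioo (0:ℝ) 1] 1) (𝓝 C) := by
    have key := lhopital_aux f' f'' (fun x => (1 - x)⁻¹) (fun x => ((1 - x)^2)⁻¹) C
      hderiv2
      (by
        intro x hx
        have h1 : HasDerivAt (fun y : ℝ => 1 - y) (-1) x := by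
          simpa using (hasDerivAt_id x).const_sub 1
        have h2 := h1.inv (hne x hx)
        refine h2.congr_deriv ?_
        ring)
      hcont
      (by
        apply ContinuousOn.inv₀
        · exact ((continuous_const.sub continuous_id).pow 2).continuousOn
        · intro x hx
          exact pow_ne_zero 2 (hne x hx))
      (tendsto_inv_nhdsGT_zero.comp hsub)
      (by
        intro ε hε
        have := (Metric.tendsto_nhds.mp hlim) ε hε
        filter_upwards [this, self_mem_nhdsWithin] with x hx hx01
        rw [Real.dist_eq] at hx
        have hp : (0:ℝ) < (1 - x)^2 := pow_pos (hpos x hx01) 2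
        have heq : f'' x - C * ((1 - x)^2)⁻¹ = (f'' x * (1 - x)^2 - C) * ((1 - x)^2)⁻¹ := by
          rw [sub_mul, mul_assoc, mul_inv_cancel₀ hp.ne', mul_one]
        rw [heq, abs_mul, abs_of_pos (inv_pos.mpr hp)]
        exact mul_le_mul_of_nonneg_right hx.le (inv_pos.mpr hp).le)
    refine key.congr (fun x => ?_)
    simp [div_eq_mul_inv]
  -- Step 2: f x / (-log (1-x)) → C
  have step2 : Tendsto (fun x => f x / (-Real.log (1 - x))) (𝓝[Ioo (0:ℝ) 1] 1) (𝓝 C) := by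
    apply lhopital_aux f f' (fun x => -Real.log (1 - x)) (fun x => (1 - x)⁻¹) C
      hderiv1
      (by
        intro x hx
        have h1 : HasDerivAt (fun y : ℝ => 1 - y) (-1) x := by
          simpa using (hasDerivAt_id x).const_sub 1
        have h2 := (Real.hasDerivAt_log (hne x hx)).comp x h1
        have h3 := h2.neg
        refine h3.congr_deriv ?_
        ring)
      (fun x hx => (hderiv2 x hx).continuousAt.continuousWithinAt)
      (by
        apply ContinuousOn.inv₀
        · exact (continuous_const.sub continuous_id).continuousOn
        · exact hne)
      (by
        have := (Real.tendsto_log_nhdsGT_zero.comp hsub)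
        exact tendsto_neg_atBot_atTop.comp this)
      (by
        intro ε hε
        have := (Metric.tendsto_nhds.mp step1) ε hε
        filter_upwards [this, self_mem_nhdsWithin] with x hx hx01
        rw [Real.dist_eq] at hx
        have hp : (0:ℝ) < 1 - x := hpos x hx01
        have heq : f' x - C * (1 - x)⁻¹ = (f' x * (1 - x) - C) * (1 - x)⁻¹ := by
          field_simp
        rw [heq, abs_mul, abs_of_pos (inv_pos.mpr hp)]
        exact mul_le_mul_of_nonneg_right hx.le (inv_pos.mpr hp).le)
  -- convert -log to |log|
  apply step2.congr'
  filter_upwards [self_mem_nhdsWithin] with x hx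
  have h1 : Real.log (1 - x) ≤ 0 :=
    Real.log_nonpos (by linarith [hx.1, hx.2]) (by linarith [hx.1, hx.2])
  rw [abs_of_nonpos h1]
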